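/- Let G be a connected graph on n ≥ 2 vertices and define f(X) = 3^{n−2} − Σ_{C ∈ 𝒞*(X)} 3^{|C|−2}, where 𝒞*(X) is the set of connected components of G − X of size at least 2. Then f is monotone: if X ⊆ Y ⊆ V, then f(X) ≤ f(Y). -/

import Mathlib

attribute [local instance] Classical.propDecidable

/-- `C` is the vertex set of a connected component of `G − X`. -/
def IsCompOf {V : Type*} (G : SimpleGraph V) (X C : Finset V) : Prop :=
  C.Nonempty ∧ Disjoint C X ∧ (G.induce (C : Set V)).Connected ∧
    ∀ a ∈ C, ∀ b : V, b ∉ X → G.Adj a b → b ∈ C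

/-- The Devadoss rank function `f(X) = 3^{n-2} - Σ_{C ∈ 𝒞*(X)} 3^{|C|-2}`. -/
noncomputable def devf {V : Type*} [Fintype V] (G : SimpleGraph V) (X : Finset V) : ℝ :=
  3 ^ (Fintype.card V - 2) -
    ∑ C ∈ Finset.univ.filter (fun C : Finset V => IsCompOf G X C ∧ 2 ≤ C.card),
      (3 : ℝ) ^ (C.card - 2)

namespace DevAux

variable {V : Type*} [Fintype V]

/-- The graph `G` with all edges meeting `X` removed. -/
def del (G : SimpleGraph V) (X : Finset V) : SimpleGraph V where
  Adj a b := G.Adj a b ∧ a ∉ X ∧ b ∉ X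
  symm := ⟨by intro a b ⟨h, ha, hb⟩; exact ⟨h.symm, hb, ha⟩⟩
  loopless := ⟨by intro a ⟨h, _, _⟩; exact G.irrefl h⟩

/-- The component of `v` in `G − X`, as a finset. -/
noncomputable def comp (G : SimpleGraph V) (X : Finset V) (v : V) : Finset V :=
  (Set.toFinite {w | (del G X).Reachable v w}).toFinset

lemma mem_comp {G : SimpleGraph V} {X : Finset V} {v w : V} :
    w ∈ comp G X v ↔ (del G X).Reachable v w := by
  simp [comp]

lemma mem_comp_self {G : SimpleGraph V} {X : Finset V} (v : V) : v ∈ comp G X v :=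
  mem_comp.2 (SimpleGraph.Reachable.refl v)

lemma comp_closed {G : SimpleGraph V} {X : Finset V} {v a b : V}
    (ha : a ∈ comp G X v) (hab : (del G X).Adj a b) : b ∈ comp G X v :=
  mem_comp.2 ((mem_comp.1 ha).trans hab.reachable)

lemma walk_not_mem {G : SimpleGraph V} {X : Finset V} {v w : V}
    (p : (del G X).Walk v w) (hv : v ∉ X) : w ∉ X := by
  induction p with
  | nil => exact hv
  | cons h p ih => exact ih h.2.2

lemma comp_not_mem {G : SimpleGraph V} {X : Finset V} {v w : V}
    (hv : v ∉ X) (hw : w ∈ comp G X v) : w ∉ X := by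
  obtain ⟨p⟩ := mem_comp.1 hw
  exact walk_not_mem p hv

lemma reach_induce {G : SimpleGraph V} {X : Finset V} (S : Finset V)
    (hcl : ∀ a ∈ S, ∀ b, (del G X).Adj a b → b ∈ S)
    {a b : V} (p : (del G X).Walk a b) (ha : a ∈ S) (hb : b ∈ S) :
    (G.induce (S : Set V)).Reachable ⟨a, ha⟩ ⟨b, hb⟩ := by
  induction p with
  | nil => rfl
  | @cons u c w h p ih =>
      have hc : c ∈ S := hcl u ha c h
      exact (SimpleGraph.Adj.reachable (by exact h.1 : (G.induce (S : Set V)).Adj ⟨u, ha⟩ ⟨c, hc⟩)).trans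
        (ih hc hb)

lemma comp_isComp {G : SimpleGraph V} {X : Finset V} {v : V} (hv : v ∉ X) :
    IsCompOf G X (comp G X v) := by
  refine ⟨⟨v, mem_comp_self v⟩, ?_, ?_, ?_⟩
  · rw [Finset.disjoint_left]
    intro w hw hwX
    exact comp_not_mem hv hw hwX
  · rw [SimpleGraph.connected_iff]
    refine ⟨?_, ⟨⟨v, by simpa using mem_comp_self v⟩⟩⟩
    rintro ⟨a, ha⟩ ⟨b, hb⟩
    have ha' : a ∈ comp G X v := by simpa using ha
    have hb' : b ∈ comp G X v := by simpa using hb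
    obtain ⟨p⟩ := (mem_comp.1 ha').symm.trans (mem_comp.1 hb')
    exact reach_induce _ (fun x hx y hy => comp_closed hx hy) p ha' hb'
  · intro a ha b hbX hab
    have haX : a ∉ X := comp_not_mem hv ha
    exact comp_closed ha ⟨hab, haX, hbX⟩

/-- Any component containing `v` equals `comp G X v`. -/
lemma comp_unique {G : SimpleGraph V} {X C : Finset V} (hC : IsCompOf G X C) {v : V}
    (hv : v ∈ C) : C = comp G X v := by
  obtain ⟨hne, hdisj, hconn, hcl⟩ := hC
  apply Finset.Subset.antisymm
  · intro w hw
    obtain ⟨p⟩ := hconn.preconnected ⟨v, hv⟩ ⟨w, hw⟩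
    rw [mem_comp]
    have : ∀ (x y : (C : Set V)) (p : (G.induce (C : Set V)).Walk x y),
        (del G X).Reachable x.1 y.1 := by
      intro x y p
      induction p with
      | nil => exact SimpleGraph.Reachable.refl _
      | @cons u c w h p ih =>
          have hu : (u : V) ∉ X := Finset.disjoint_left.1 hdisj u.2
          have hc : (c : V) ∉ X := Finset.disjoint_left.1 hdisj c.2
          exact (SimpleGraph.Adj.reachable (⟨h, hu, hc⟩ : (del G X).Adj u c)).trans ih
    simpa using this _ _ p
  · intro w hw
    obtain ⟨p⟩ := mem_comp.1 hw
    have step : ∀ {a b : V} (p : (del G X).Walk a b), a ∈ C → b ∈ C := by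
      intro a b p
      induction p with
      | nil => exact id
      | @cons u c w h p ih => exact fun ha => ih (hcl u ha c h.2.2 h.1)
    exact step p hv

lemma comp_disjoint {G : SimpleGraph V} {X C D : Finset V} (hC : IsCompOf G X C)
    (hD : IsCompOf G X D) (hne : C ≠ D) : Disjoint C D := by
  rw [Finset.disjoint_left]
  intro v hvC hvD
  exact hne ((comp_unique hC hvC).trans (comp_unique hD hvD).symm)

lemma sum_pow_le (𝒟 : Finset (Finset V)) (h2 : ∀ D ∈ 𝒟, 2 ≤ D.card) :
    ∑ D ∈ 𝒟, (3 : ℝ) ^ (D.card - 2) ≤ 3 ^ ((∑ D ∈ 𝒟, D.card) - 2) := by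
  classical
  induction 𝒟 using Finset.induction_on with
  | empty => simp
  | @insert D 𝒟 hD ih =>
      rw [Finset.sum_insert hD, Finset.sum_insert hD]
      rcases 𝒟.eq_empty_or_nonempty with rfl | ⟨D₀, hD₀⟩
      · simp
      · have hd : 2 ≤ D.card := h2 D (Finset.mem_insert_self _ _)
        have h2' : ∀ E ∈ 𝒟, 2 ≤ E.card := fun E hE => h2 E (Finset.mem_insert_of_mem hE)
        have hS : 2 ≤ ∑ E ∈ 𝒟, E.card :=
          le_trans (h2' D₀ hD₀) (Finset.single_le_sum (fun _ _ => Nat.zero_le _) hD₀)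
        set S := ∑ E ∈ 𝒟, E.card with hSdef
        calc (3 : ℝ) ^ (D.card - 2) + ∑ E ∈ 𝒟, (3 : ℝ) ^ (E.card - 2)
            ≤ 3 ^ (D.card - 2) + 3 ^ (S - 2) := by linarith [ih h2']
          _ ≤ 3 ^ (D.card + S - 2) := by
              have hE : D.card + S - 2 = (D.card - 2) + (S - 2) + 2 := by omega
              rw [hE, pow_add, pow_add]
              have h1 : (1 : ℝ) ≤ 3 ^ (D.card - 2) := one_le_pow₀ (by norm_num)
              have h2'' : (1 : ℝ) ≤ 3 ^ (S - 2) := one_le_pow₀ (by norm_num)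
              nlinarith [pow_pos (by norm_num : (0:ℝ) < 3) (D.card - 2),
                pow_pos (by norm_num : (0:ℝ) < 3) (S - 2)]

lemma del_mono {G : SimpleGraph V} {X Y : Finset V} (hXY : X ⊆ Y) : del G Y ≤ del G X :=
  fun _ _ ⟨h, ha, hb⟩ => ⟨h, fun hx => ha (hXY hx), fun hx => hb (hXY hx)⟩

end DevAux

open DevAux in
theorem stmt_4 {V : Type*} [Fintype V] (G : SimpleGraph V) (hG : G.Connected)
    (hn : 2 ≤ Fintype.card V) (X Y : Finset V) (hXY : X ⊆ Y) :
    devf G X ≤ devf G Y := by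
  classical
  unfold devf
  apply sub_le_sub_left
  set SX := Finset.univ.filter (fun C : Finset V => IsCompOf G X C ∧ 2 ≤ C.card) with hSX
  set SY := Finset.univ.filter (fun C : Finset V => IsCompOf G Y C ∧ 2 ≤ C.card) with hSY
  set φ : Finset V → Finset V :=
    fun D => if h : D.Nonempty then comp G X h.choose else ∅ with hφ
  have key : ∀ D ∈ SY, (φ D ∈ SX ∧ D ⊆ φ D) := by
    intro D hD
    rw [hSY, Finset.mem_filter] at hD
    obtain ⟨-, hDcomp, hDcard⟩ := hD
    have hne : D.Nonempty := hDcomp.1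
    have hφD : φ D = comp G X hne.choose := dif_pos hne
    set v := hne.choose with hv
    have hvD : v ∈ D := hne.choose_spec
    have hvY : v ∉ Y := Finset.disjoint_left.1 hDcomp.2.1 hvD
    have hvX : v ∉ X := fun h => hvY (hXY h)
    have hsub : D ⊆ φ D := by
      rw [hφD]
      intro w hw
      have : w ∈ comp G Y v := (comp_unique hDcomp hvD) ▸ hw
      exact mem_comp.2 ((mem_comp.1 this).mono (del_mono hXY))
    refine ⟨?_, hsub⟩
    rw [hSX, Finset.mem_filter]
    refine ⟨Finset.mem_univ _, ?_, le_trans hDcard (Finset.card_le_card hsub)⟩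
    rw [hφD]
    exact comp_isComp hvX
  rw [← Finset.sum_fiberwise_of_maps_to (fun D hD => (key D hD).1)
    (fun D => (3 : ℝ) ^ (D.card - 2))]
  apply Finset.sum_le_sum
  intro C hC
  set 𝒟 := SY.filter (fun D => φ D = C) with h𝒟
  have h2 : ∀ D ∈ 𝒟, 2 ≤ D.card := by
    intro D hD
    rw [h𝒟, Finset.mem_filter, hSY, Finset.mem_filter] at hD
    exact hD.1.2.2
  have hdisj : ∀ D₁ ∈ 𝒟, ∀ D₂ ∈ 𝒟, D₁ ≠ D₂ → Disjoint D₁ D₂ := by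
    intro D₁ hD₁ D₂ hD₂ hne
    rw [h𝒟, Finset.mem_filter, hSY, Finset.mem_filter] at hD₁ hD₂
    exact comp_disjoint hD₁.1.2.1 hD₂.1.2.1 hne
  have hsum : (∑ D ∈ 𝒟, D.card) ≤ C.card := by
    rw [← Finset.card_biUnion hdisj]
    apply Finset.card_le_card
    intro x hx
    obtain ⟨D, hD, hxD⟩ := Finset.mem_biUnion.1 hx
    have hD' := hD
    rw [h𝒟, Finset.mem_filter] at hD'
    exact hD'.2 ▸ (key D hD'.1).2 hxD
  calc ∑ D ∈ 𝒟, (3 : ℝ) ^ (D.card - 2)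
      ≤ 3 ^ ((∑ D ∈ 𝒟, D.card) - 2) := sum_pow_le 𝒟 h2
    _ ≤ 3 ^ (C.card - 2) := by
        apply pow_le_pow_right₀ (by norm_num)
        omega
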